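/- Let c¹,…,cⁿ be a lattice basis of ℤⁿ, let x̄ ∈ K_C ∩ ℤⁿ with c^i·x̄ > 0 for at least one i, and let ℓ be the largest index i with c^i·x̄ > 0. The set of extreme points of Q_C(x̄) is exactly {v¹,…,v^ℓ}, where for k = 1,…,ℓ−1 the point v^k is the unique point of ℝⁿ satisfying c^i·v^k = c^i·x̄ for i = 1,…,k−1, c^k·v^k = c^k·x̄ + 1, and c^i·v^k = 0 for i = k+1,…,n, and v^ℓ = x̄. Moreover, the recession cone of Q_C(x̄) is K_C, and Q_C(x̄) is full-dimensional. -/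

import Mathlib

/-- `x` is an integer point. -/
def isInt {n : ℕ} (x : Fin n → ℝ) : Prop := ∀ i, ∃ z : ℤ, x i = (z : ℝ)

/-- Dot product of an integer vector with a real vector. -/
def rdot {n : ℕ} (c : Fin n → ℤ) (x : Fin n → ℝ) : ℝ := ∑ j, (c j : ℝ) * x j

/-- Lexicographic strict order associated with the lattice basis given by the rows of `C`:
`x ≺_C y` iff `cⁱ·x < cⁱ·y` at the smallest index `i` where `cⁱ·x ≠ cⁱ·y`. -/
def lexLtC {n : ℕ} (C : Matrix (Fin n) (Fin n) ℤ) (x y : Fin n → ℝ) : Prop :=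
  ∃ i : Fin n, rdot (C i) x < rdot (C i) y ∧ ∀ j : Fin n, j < i → rdot (C j) x = rdot (C j) y

/-- `x ⪯_C y` iff `x ≺_C y` or `x = y`. -/
def lexLeC {n : ℕ} (C : Matrix (Fin n) (Fin n) ℤ) (x y : Fin n → ℝ) : Prop :=
  lexLtC C x y ∨ x = y

/-- `Q_C(x̄) = conv {x ∈ K_C ∩ ℤⁿ : x ⪰_C x̄}`, where
`K_C = {x : cⁱ·x ≥ 0 for all i}`. -/
def QC {n : ℕ} (C : Matrix (Fin n) (Fin n) ℤ) (xb : Fin n → ℝ) : Set (Fin n → ℝ) :=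
  convexHull ℝ {x | (∀ i, 0 ≤ rdot (C i) x) ∧ isInt x ∧ lexLeC C xb x}

namespace Stmt8
variable {n : ℕ}

noncomputable def Cr (C : Matrix (Fin n) (Fin n) ℤ) : Matrix (Fin n) (Fin n) ℝ :=
  C.map ((↑) : ℤ → ℝ)
def Einv (C : Matrix (Fin n) (Fin n) ℤ) : Matrix (Fin n) (Fin n) ℤ := C.det • C.adjugate
noncomputable def Er (C : Matrix (Fin n) (Fin n) ℤ) : Matrix (Fin n) (Fin n) ℝ :=
  (Einv C).map ((↑) : ℤ → ℝ)

variable (C : Matrix (Fin n) (Fin n) ℤ)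

lemma detsq (hC : C.det = 1 ∨ C.det = -1) : C.det * C.det = 1 := by rcases hC with h | h <;> rw [h] <;> ring

lemma hCE (hC : C.det = 1 ∨ C.det = -1) : C * Einv C = 1 := by
  rw [Einv, Matrix.mul_smul, Matrix.mul_adjugate, smul_smul, detsq C hC, one_smul]

lemma hEC (hC : C.det = 1 ∨ C.det = -1) : Einv C * C = 1 := by
  rw [Einv, Matrix.smul_mul, Matrix.adjugate_mul, smul_smul, detsq C hC, one_smul]

lemma hCrEr (hC : C.det = 1 ∨ C.det = -1) : Cr C * Er C = 1 := by
  have : Cr C * Er C = (C * Einv C).map ((Int.castRingHom ℝ) : ℤ →+* ℝ) := by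
    rw [Matrix.map_mul]; rfl
  rw [this, hCE C hC]; ext i j; simp [Matrix.one_apply, Matrix.map, apply_ite]
lemma hErCr (hC : C.det = 1 ∨ C.det = -1) : Er C * Cr C = 1 := by
  have : Er C * Cr C = (Einv C * C).map ((Int.castRingHom ℝ) : ℤ →+* ℝ) := by
    rw [Matrix.map_mul]; rfl
  rw [this, hEC C hC]; ext i j; simp [Matrix.one_apply, Matrix.map, apply_ite]

lemma rdot_mulVec (x : Fin n → ℝ) : (fun i => rdot (C i) x) = (Cr C).mulVec x := by
  funext i; simp [rdot, Cr, Matrix.mulVec, dotProduct, Matrix.map]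

lemma rdot_solve (hC : C.det = 1 ∨ C.det = -1) (b : Fin n → ℝ) :
    ∀ i, rdot (C i) ((Er C).mulVec b) = b i := by
  intro i
  have := congrFun (rdot_mulVec C ((Er C).mulVec b)) i
  rw [this, Matrix.mulVec_mulVec, hCrEr C hC, Matrix.one_mulVec]

lemma rdot_inj (hC : C.det = 1 ∨ C.det = -1) {x y : Fin n → ℝ}
    (h : ∀ i, rdot (C i) x = rdot (C i) y) : x = y := by
  have hx : (Cr C).mulVec x = (Cr C).mulVec y := by
    rw [← rdot_mulVec, ← rdot_mulVec]; funext i; exact h i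
  have := congrArg ((Er C).mulVec) hx
  rwa [Matrix.mulVec_mulVec, Matrix.mulVec_mulVec, hErCr C hC, Matrix.one_mulVec, Matrix.one_mulVec] at this

lemma rdot_add (c : Fin n → ℤ) (x y : Fin n → ℝ) : rdot c (x + y) = rdot c x + rdot c y := by
  simp [rdot, mul_add, Finset.sum_add_distrib]
lemma rdot_sub (c : Fin n → ℤ) (x y : Fin n → ℝ) : rdot c (x - y) = rdot c x - rdot c y := by
  simp [rdot, mul_sub, Finset.sum_sub_distrib]
lemma rdot_smul (c : Fin n → ℤ) (t : ℝ) (x : Fin n → ℝ) : rdot c (t • x) = t * rdot c x := by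
  simp only [rdot, Pi.smul_apply, smul_eq_mul, Finset.mul_sum]
  exact Finset.sum_congr rfl fun j _ => by ring
lemma rdot_combo (c : Fin n → ℤ) (a b : ℝ) (x y : Fin n → ℝ) :
    rdot c (a • x + b • y) = a * rdot c x + b * rdot c y := by
  rw [rdot_add, rdot_smul, rdot_smul]

lemma rdot_isInt {x : Fin n → ℝ} (hx : isInt x) (i : Fin n) : ∃ z : ℤ, rdot (C i) x = z := by
  refine ⟨∑ j, C i j * (hx j).choose, ?_⟩
  rw [rdot]; push_cast; exact Finset.sum_congr rfl fun j _ => congrArg (((C i j : ℝ)) * ·) (hx j).choose_spec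

lemma isInt_of_rdot (hC : C.det = 1 ∨ C.det = -1) {x : Fin n → ℝ}
    (h : ∀ i, ∃ z : ℤ, rdot (C i) x = z) : isInt x := by
  have hx : x = (Er C).mulVec (fun i => rdot (C i) x) := by
    rw [rdot_mulVec, Matrix.mulVec_mulVec, hErCr C hC, Matrix.one_mulVec]
  intro j
  refine ⟨∑ i, Einv C j i * (h i).choose, ?_⟩
  have hxj : x j = ∑ i, (Einv C j i : ℝ) * rdot (C i) x := by
    conv_lhs => rw [hx]
    simp [Matrix.mulVec, dotProduct, Er, Matrix.map]
  rw [hxj]; push_cast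
  exact Finset.sum_congr rfl fun i _ => congrArg (((Einv C j i : ℝ)) * ·) (h i).choose_spec


lemma lex_trans {x y z : Fin n → ℝ} (h1 : lexLeC C x y) (h2 : lexLeC C y z) : lexLeC C x z := by
  rcases h2 with h2 | rfl; swap; · exact h1
  rcases h1 with h1 | rfl; swap; · exact Or.inl h2
  obtain ⟨i₁, hlt1, heq1⟩ := h1
  obtain ⟨i₂, hlt2, heq2⟩ := h2
  rcases lt_trichotomy i₁ i₂ with h | h | h
  · exact Or.inl ⟨i₁, by rw [← heq2 i₁ h]; exact hlt1, fun j hj => (heq1 j hj).trans (heq2 j (hj.trans h))⟩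
  · subst h; exact Or.inl ⟨i₁, hlt1.trans hlt2, fun j hj => (heq1 j hj).trans (heq2 j hj)⟩
  · exact Or.inl ⟨i₂, by rw [heq1 i₂ h]; exact hlt2, fun j hj => (heq1 j (hj.trans h)).trans (heq2 j hj)⟩

lemma int_gap {a b : ℝ} (ha : ∃ z : ℤ, a = z) (hb : ∃ z : ℤ, b = z) (h : a < b) : a + 1 ≤ b := by
  obtain ⟨z, rfl⟩ := ha; obtain ⟨w, rfl⟩ := hb
  have : z < w := by exact_mod_cast h
  exact_mod_cast this

variable (xb : Fin n → ℝ) (ℓ : Fin n)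

/-- The target dual values of the candidate vertex `v^k`. -/
noncomputable def AA (k : Fin n) : Fin n → ℝ := fun i =>
  if i < k then rdot (C i) xb else
    if i = k then rdot (C k) xb + (if k = ℓ then 0 else 1) else 0

/-- The candidate vertices. -/
noncomputable def VV (k : Fin n) : Fin n → ℝ := (Er C).mulVec (AA C xb ℓ k)

def SS : Set (Fin n → ℝ) := {x | (∀ i, 0 ≤ rdot (C i) x) ∧ isInt x ∧ lexLeC C xb x}

variable {C xb ℓ} (hC : C.det = 1 ∨ C.det = -1)
  (hK : ∀ i, 0 ≤ rdot (C i) xb) (hI : isInt xb)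
  (hℓ : 0 < rdot (C ℓ) xb) (hmax : ∀ i : Fin n, 0 < rdot (C i) xb → i ≤ ℓ)

include hC in
lemma rdot_VV (k i : Fin n) : rdot (C i) (VV C xb ℓ k) = AA C xb ℓ k i := rdot_solve C hC _ i

include hK hmax in
lemma hN0 {i : Fin n} (h : ℓ < i) : rdot (C i) xb = 0 := by
  rcases (hK i).lt_or_eq with h' | h'
  · exact absurd (hmax i h') (not_le.mpr h)
  · exact h'.symm

include hC hK hI hmax in
lemma xb_eq_VV : xb = VV C xb ℓ ℓ := by
  refine rdot_inj C hC fun i => ?_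
  rw [rdot_VV hC, AA]
  rcases lt_trichotomy i ℓ with h | h | h
  · rw [if_pos h]
  · subst h; simp
  · rw [if_neg (not_lt.mpr h.le), if_neg (Fin.ne_of_gt h), hN0 hK hmax h]

include hC hK hI in
lemma AA_int (k i : Fin n) : ∃ z : ℤ, AA C xb ℓ k i = z := by
  rw [AA]
  obtain ⟨z, hz⟩ := rdot_isInt C hI i
  obtain ⟨w, hw⟩ := rdot_isInt C hI k
  split
  · exact ⟨z, hz⟩
  split
  · split
    · exact ⟨w, by rw [hw]; push_cast; ring⟩
    · exact ⟨w + 1, by rw [hw]; push_cast; ring⟩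
  · exact ⟨0, by norm_num⟩

include hC hK hI hℓ hmax in
lemma VV_mem_SS {k : Fin n} (hk : k ≤ ℓ) : VV C xb ℓ k ∈ SS C xb := by
  refine ⟨fun i => ?_, isInt_of_rdot C hC fun i => by rw [rdot_VV hC]; exact AA_int hC hK hI k i, ?_⟩
  · rw [rdot_VV hC, AA]
    split
    · exact hK _
    split
    · have : (0:ℝ) ≤ if k = ℓ then 0 else 1 := by split <;> norm_num
      exact add_nonneg (hK _) this
    · exact le_rfl
  · rcases eq_or_lt_of_le hk with rfl | hkl
    · exact Or.inr (xb_eq_VV hC hK hI hmax)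
    · refine Or.inl ⟨k, ?_, fun j hj => ?_⟩
      · rw [rdot_VV hC, AA, if_neg (lt_irrefl k), if_pos rfl, if_neg (Fin.ne_of_lt hkl)]
        norm_num
      · rw [rdot_VV hC, AA, if_pos hj]

include hC hK hI hmax in
lemma L1 {x : Fin n → ℝ} (hx : x ∈ SS C xb) : ∃ k, k ≤ ℓ ∧ ∀ i, AA C xb ℓ k i ≤ rdot (C i) x := by
  obtain ⟨hxK, hxI, hxL⟩ := hx
  rcases hxL with ⟨i₀, hlt, hbef⟩ | rfl
  swap
  · refine ⟨ℓ, le_rfl, fun i => ?_⟩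
    rw [AA]
    split
    · exact le_rfl
    split
    · next h2 => subst h2; simp
    · exact hxK i
  by_cases hi₀ : i₀ ≤ ℓ
  · refine ⟨i₀, hi₀, fun i => ?_⟩
    rw [AA]
    split
    · next h => exact (hbef i h).le
    split
    · next h =>
      subst h
      split
      · next h => linarith [hlt]
      · next h =>
        exact int_gap (rdot_isInt C hI i) (rdot_isInt C hxI i) hlt
    · exact hxK i
  · push_neg at hi₀
    refine ⟨ℓ, le_rfl, fun i => ?_⟩
    rw [AA]
    split
    · next h => exact (hbef i (h.trans hi₀)).le
    split
    · next h => subst h; simp [hbef i hi₀]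
    · exact hxK i


lemma rdot_zero (c : Fin n → ℤ) : rdot c (0 : Fin n → ℝ) = 0 := by simp [rdot]

lemma rdot_finsum {ι : Type*} (c : Fin n → ℤ) (s : Finset ι) (g : ι → (Fin n → ℝ)) :
    rdot c (∑ i ∈ s, g i) = ∑ i ∈ s, rdot c (g i) := by
  classical
  induction s using Finset.induction_on with
  | empty => simp [rdot_zero]
  | insert _ _ hnotmem ih =>
    rw [Finset.sum_insert hnotmem, Finset.sum_insert hnotmem, rdot_add, ih]

include hC in
lemma rdot_ff (i₀ i : Fin n) : rdot (C i) ((Er C).mulVec (Pi.single i₀ 1)) = if i = i₀ then 1 else 0 := by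
  rw [rdot_solve C hC _ i, Pi.single_apply]

include hC in
lemma isInt_ff (i₀ : Fin n) : isInt ((Er C).mulVec (Pi.single i₀ 1)) := by
  refine isInt_of_rdot C hC fun i => ?_
  rw [rdot_ff hC]
  split
  · exact ⟨1, by norm_num⟩
  · exact ⟨0, by norm_num⟩

lemma isInt_add {x y : Fin n → ℝ} (hx : isInt x) (hy : isInt y) : isInt (x + y) := by
  intro i
  obtain ⟨z, hz⟩ := hx i; obtain ⟨w, hw⟩ := hy i
  exact ⟨z + w, by simp [hz, hw]⟩

lemma isInt_natsmul {x : Fin n → ℝ} (hx : isInt x) (m : ℕ) : isInt ((m : ℝ) • x) := by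
  intro i
  obtain ⟨z, hz⟩ := hx i
  exact ⟨m * z, by rw [Pi.smul_apply, hz, smul_eq_mul]; push_cast; ring⟩

lemma QQ_sub_K : ∀ x ∈ convexHull ℝ (SS C xb), ∀ i, 0 ≤ rdot (C i) x := by
  intro x hx i
  have hconv : Convex ℝ {x : Fin n → ℝ | 0 ≤ rdot (C i) x} := by
    intro p hp q hq a b ha hb hab
    simp only [Set.mem_setOf_eq] at *
    rw [rdot_combo]
    exact add_nonneg (mul_nonneg ha hp) (mul_nonneg hb hq)
  exact convexHull_min (fun y hy => hy.1 i) hconv hx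

include hC in
lemma L3a (i₀ : Fin n) : ∀ x ∈ convexHull ℝ (SS C xb), ∀ t : ℝ, 0 ≤ t →
    x + t • (Er C).mulVec (Pi.single i₀ 1) ∈ convexHull ℝ (SS C xb) := by
  set f := (Er C).mulVec (Pi.single i₀ 1) with hf
  have hQc : Convex ℝ (convexHull ℝ (SS C xb)) := convex_convexHull ℝ _
  intro x hx
  have hsub : SS C xb ⊆ {y : Fin n → ℝ | ∀ t : ℝ, 0 ≤ t → y + t • f ∈ convexHull ℝ (SS C xb)} := by
    intro s hs t ht
    obtain ⟨m, hm⟩ := exists_nat_ge t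
    rcases Nat.eq_zero_or_pos m with rfl | hmpos
    · have ht0 : t = 0 := le_antisymm (by exact_mod_cast hm) ht
      simpa [ht0] using subset_convexHull ℝ _ hs
    · have hmR : (0:ℝ) < m := by exact_mod_cast hmpos
      have hs' : s + (m : ℝ) • f ∈ SS C xb := by
        obtain ⟨hs1, hs2, hs3⟩ := hs
        refine ⟨fun i => ?_, isInt_add hs2 (isInt_natsmul (isInt_ff hC i₀) m), ?_⟩
        · rw [rdot_add, rdot_smul, hf, rdot_ff hC]
          split
          · nlinarith [hs1 i]
          · nlinarith [hs1 i]
        · refine lex_trans C hs3 (Or.inl ⟨i₀, ?_, fun j hj => ?_⟩)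
          · rw [rdot_add, rdot_smul, hf, rdot_ff hC, if_pos rfl]
            nlinarith
          · rw [rdot_add, rdot_smul, hf, rdot_ff hC, if_neg (Fin.ne_of_lt hj)]
            ring
      have key : s + t • f =
          (1 - t / m) • s + (t / m) • (s + (m : ℝ) • f) := by
        match_scalars <;> field_simp <;> ring
      rw [key]
      refine hQc (subset_convexHull ℝ _ hs) (subset_convexHull ℝ _ hs') ?_ ?_ (by ring)
      · have := div_le_one_of_le₀ hm hmR.le
        linarith
      · positivity
  have hTconv : Convex ℝ {y : Fin n → ℝ | ∀ t : ℝ, 0 ≤ t → y + t • f ∈ convexHull ℝ (SS C xb)} := by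
    intro p hp q hq a b ha hb hab t ht
    have key : a • p + b • q + t • f =
        a • (p + t • f) + b • (q + t • f) := by
      match_scalars <;> ring_nf <;> nlinarith [hab]
    rw [key]
    exact hQc (hp t ht) (hq t ht) ha hb hab
  exact convexHull_min hsub hTconv hx

include hC in
lemma L3 : ∀ x ∈ convexHull ℝ (SS C xb), ∀ d : Fin n → ℝ, (∀ i, 0 ≤ rdot (C i) d) →
    x + d ∈ convexHull ℝ (SS C xb) := by
  intro x hx d hd
  have hrepr : d = ∑ i : Fin n, (rdot (C i) d) • (Er C).mulVec (Pi.single i 1) := by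
    refine rdot_inj C hC fun j => ?_
    rw [rdot_finsum]
    have hterm : ∀ i : Fin n, rdot (C j) ((rdot (C i) d) • (Er C).mulVec (Pi.single i 1))
        = if j = i then rdot (C i) d else 0 := by
      intro i
      rw [rdot_smul, rdot_ff hC i j]
      split
      · simp
      · simp
    rw [Finset.sum_congr rfl fun i _ => hterm i, Finset.sum_ite_eq Finset.univ j,
      if_pos (Finset.mem_univ j)]
  have main : ∀ s : Finset (Fin n),
      x + ∑ i ∈ s, (rdot (C i) d) • (Er C).mulVec (Pi.single i 1) ∈ convexHull ℝ (SS C xb) := by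
    intro s
    classical
    induction s using Finset.induction_on with
    | empty => simpa using hx
    | @insert a s hnotmem ih =>
      rw [Finset.sum_insert hnotmem]
      have hre : x + ((rdot (C a) d) • (Er C).mulVec (Pi.single a 1)
            + ∑ i ∈ s, (rdot (C i) d) • (Er C).mulVec (Pi.single i 1))
          = (x + ∑ i ∈ s, (rdot (C i) d) • (Er C).mulVec (Pi.single i 1))
            + (rdot (C a) d) • (Er C).mulVec (Pi.single a 1) := by
        abel
      rw [hre]
      exact L3a hC a _ ih _ (hd a)
  rw [hrepr]
  exact main Finset.univ

include hC hK hI hℓ hmax in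
lemma QQ_eq_PP : convexHull ℝ (SS C xb) =
    {x : Fin n → ℝ | ∃ w ∈ convexHull ℝ (VV C xb ℓ '' Set.Iic ℓ), ∃ d : Fin n → ℝ,
      (∀ i, 0 ≤ rdot (C i) d) ∧ x = w + d} := by
  apply Set.Subset.antisymm
  · refine convexHull_min ?_ ?_
    · intro x hx
      obtain ⟨k, hk, hAk⟩ := L1 hC hK hI hmax hx
      refine ⟨VV C xb ℓ k, subset_convexHull ℝ _ ⟨k, hk, rfl⟩, x - VV C xb ℓ k, fun i => ?_, ?_⟩
      · rw [rdot_sub, rdot_VV hC]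
        linarith [hAk i]
      · abel
    · rintro x ⟨w1, hw1, d1, hd1, rfl⟩ y ⟨w2, hw2, d2, hd2, rfl⟩ a b ha hb hab
      refine ⟨a • w1 + b • w2, (convex_convexHull ℝ _) hw1 hw2 ha hb hab,
        a • d1 + b • d2, fun i => ?_, ?_⟩
      · rw [rdot_combo]
        exact add_nonneg (mul_nonneg ha (hd1 i)) (mul_nonneg hb (hd2 i))
      · module
  · rintro x ⟨w, hw, d, hd, rfl⟩
    have hwQ : w ∈ convexHull ℝ (SS C xb) := by
      refine convexHull_min ?_ (convex_convexHull ℝ _) hw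
      rintro _ ⟨k, hk, rfl⟩
      exact subset_convexHull ℝ _ (VV_mem_SS hC hK hI hℓ hmax hk)
    exact L3 hC w hwQ d hd

end Stmt8

namespace Stmt8
variable {n : ℕ} {C : Matrix (Fin n) (Fin n) ℤ} {xb : Fin n → ℝ}

/-- `Nn t` = `rdot (C t) xb` for valid `t`. -/
noncomputable def Nn (C : Matrix (Fin n) (Fin n) ℤ) (xb : Fin n → ℝ) (t : ℕ) : ℝ :=
  if h : t < n then rdot (C ⟨t, h⟩) xb else 0

/-- Weights, by distance below `k`. -/
noncomputable def LL (C : Matrix (Fin n) (Fin n) ℤ) (xb : Fin n → ℝ) (k : ℕ) : ℕ → ℝ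
  | 0 => 1
  | (m+1) => (Nn C xb (k - m) + 2) * LL C xb k m

variable (hK : ∀ i, 0 ≤ rdot (C i) xb)

lemma Nn_eq (i : Fin n) : Nn C xb (i : ℕ) = rdot (C i) xb := by
  rw [Nn, dif_pos i.isLt]

include hK in
lemma Nn_nonneg (t : ℕ) : 0 ≤ Nn C xb t := by
  rw [Nn]; split
  · exact hK _
  · exact le_rfl

include hK in
lemma LL_ge_one (k m : ℕ) : 1 ≤ LL C xb k m := by
  induction m with
  | zero => exact le_rfl
  | succ m ih => rw [LL]; nlinarith [Nn_nonneg hK (k - m)]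

include hK in
lemma LL_key (k : Fin n) :
    ∀ m : ℕ, 1 ≤ m → ∀ j : Fin n, j < k → (k : ℕ) - (j : ℕ) = m →
    (∑ i ∈ Finset.Ioo j k, LL C xb (k : ℕ) ((k : ℕ) - (i : ℕ)) * rdot (C i) xb)
      + (rdot (C k) xb + 1) < LL C xb (k : ℕ) m := by
  intro m
  induction m with
  | zero => omega
  | succ m ih =>
    intro _ j hjk hm
    rcases Nat.eq_zero_or_pos m with rfl | hm1
    · -- k = j+1 : empty interval
      have hempty : Finset.Ioo j k = ∅ := by
        ext i
        simp only [Finset.mem_Ioo, Finset.notMem_empty, iff_false, not_and, Fin.lt_def]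
        omega
      rw [hempty]
      have : (k : ℕ) - 0 = (k : ℕ) := by omega
      rw [LL, this, Nn_eq k]
      simp only [Finset.sum_empty, LL]
      nlinarith [LL_ge_one hK (k : ℕ) 0]
    · have hj1 : (j : ℕ) + 1 < n := by omega
      set j' : Fin n := ⟨(j : ℕ) + 1, hj1⟩ with hj'
      have hj'k : j' < k := by rw [Fin.lt_def]; show (j:ℕ)+1 < (k:ℕ); omega
      have hval : (j' : ℕ) = (j : ℕ) + 1 := rfl
      have hsplit : Finset.Ioo j k = insert j' (Finset.Ioo j' k) := by
        ext i
        simp only [Finset.mem_Ioo, Finset.mem_insert, Fin.lt_def, Fin.ext_iff, hval]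
        omega
      have hnotmem : j' ∉ Finset.Ioo j' k := by simp
      rw [hsplit, Finset.sum_insert hnotmem]
      have hkj' : (k : ℕ) - (j' : ℕ) = m := by rw [hval]; omega
      have hkm : (k : ℕ) - m = (j' : ℕ) := by rw [hval]; omega
      have hIH := ih hm1 j' hj'k hkj'
      rw [LL, hkm, Nn_eq j', hkj']
      have h1 := LL_ge_one hK (k : ℕ) m
      have h2 := hK j'
      nlinarith

/-- The weight vector used to expose `v^k` as a vertex. -/
noncomputable def lam (C : Matrix (Fin n) (Fin n) ℤ) (xb : Fin n → ℝ) (k : Fin n) :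
    Fin n → ℝ := fun i => if k < i then 2 else LL C xb (k : ℕ) ((k : ℕ) - (i : ℕ))

include hK in
lemma lam_pos (k i : Fin n) : 0 < lam C xb k i := by
  rw [lam]; split
  · norm_num
  · linarith [LL_ge_one hK (k : ℕ) ((k : ℕ) - (i : ℕ))]

end Stmt8

namespace Stmt8
variable {n : ℕ} {C : Matrix (Fin n) (Fin n) ℤ} {xb : Fin n → ℝ} {ℓ : Fin n}
variable (hC : C.det = 1 ∨ C.det = -1)
  (hK : ∀ i, 0 ≤ rdot (C i) xb) (hI : isInt xb)
  (hℓ : 0 < rdot (C ℓ) xb) (hmax : ∀ i : Fin n, 0 < rdot (C i) xb → i ≤ ℓ)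

noncomputable def fk (C : Matrix (Fin n) (Fin n) ℤ) (xb : Fin n → ℝ) (k : Fin n)
    (x : Fin n → ℝ) : ℝ := ∑ i, lam C xb k i * rdot (C i) x

lemma fk_add (k : Fin n) (x y : Fin n → ℝ) :
    fk C xb k (x + y) = fk C xb k x + fk C xb k y := by
  simp only [fk, rdot_add, mul_add, Finset.sum_add_distrib]

lemma fk_combo (k : Fin n) (a b : ℝ) (x y : Fin n → ℝ) :
    fk C xb k (a • x + b • y) = a * fk C xb k x + b * fk C xb k y := by
  simp only [fk, rdot_combo, mul_add, Finset.sum_add_distrib, Finset.mul_sum]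
  congr 1
  · exact Finset.sum_congr rfl fun i _ => by ring
  · exact Finset.sum_congr rfl fun i _ => by ring

lemma fk_sum {ι : Type*} (k : Fin n) (t : Finset ι) (wt : ι → ℝ) (g : ι → Fin n → ℝ) :
    fk C xb k (∑ y ∈ t, wt y • g y) = ∑ y ∈ t, wt y * fk C xb k (g y) := by
  simp only [fk, rdot_finsum, rdot_smul, Finset.mul_sum]
  rw [Finset.sum_comm]
  exact Finset.sum_congr rfl fun y _ => Finset.sum_congr rfl fun i _ => by ring

include hC hK hI hℓ hmax in
lemma N1 : 1 ≤ rdot (C ℓ) xb := by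
  have := int_gap ⟨0, by norm_num⟩ (rdot_isInt C hI ℓ) hℓ
  linarith

include hC hK hI hℓ hmax in
lemma key_strict {j k : Fin n} (hj : j ≤ ℓ) (hk : k ≤ ℓ) (hne : j ≠ k) :
    fk C xb k (VV C xb ℓ k) < fk C xb k (VV C xb ℓ j) := by
  have hN1 := N1 hC hK hI hℓ hmax
  rw [← sub_pos, fk, fk, ← Finset.sum_sub_distrib]
  simp only [rdot_VV hC]
  rcases lt_or_gt_of_ne hne with hjk | hkj
  · -- j < k : use the recursive weight bound
    have hjknat : (j : ℕ) < (k : ℕ) := hjk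
    have hident : ∀ i : Fin n, lam C xb k i * AA C xb ℓ j i - lam C xb k i * AA C xb ℓ k i =
        (if i = j then LL C xb (k : ℕ) ((k : ℕ) - (j : ℕ)) else 0)
        - (if i ∈ Finset.Ioo j k then LL C xb (k : ℕ) ((k : ℕ) - (i : ℕ)) * rdot (C i) xb else 0)
        - (if i = k then rdot (C k) xb + (if k = ℓ then 0 else 1) else 0) := by
      intro i
      rcases lt_trichotomy i j with h1 | heq | h1
      · have hik : i < k := h1.trans hjk
        rw [AA, AA, if_pos h1, if_pos hik,
          if_neg (Fin.ne_of_lt h1),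
          if_neg (show i ∉ Finset.Ioo j k by
            simp only [Finset.mem_Ioo]; rintro ⟨hc, -⟩; exact absurd hc (not_lt.mpr h1.le)),
          if_neg (Fin.ne_of_lt hik)]
        ring
      · subst heq
        have hjℓ : i ≠ ℓ := Fin.ne_of_lt (lt_of_lt_of_le hjk hk)
        rw [AA, AA, if_neg (lt_irrefl i), if_pos rfl, if_pos hjk, if_pos rfl,
          if_neg (show i ∉ Finset.Ioo i k by simp), if_neg hne, lam,
          if_neg (not_lt.mpr hjk.le), if_neg hjℓ]
        ring
      · rcases lt_trichotomy i k with h2 | heq | h2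
        · rw [AA, AA, if_neg (not_lt.mpr h1.le), if_neg (Fin.ne_of_gt h1), if_pos h2,
            if_neg (Fin.ne_of_gt h1),
            if_pos (show i ∈ Finset.Ioo j k from Finset.mem_Ioo.mpr ⟨h1, h2⟩),
            if_neg (Fin.ne_of_lt h2), lam, if_neg (not_lt.mpr h2.le)]
          ring
        · subst heq
          rw [AA, AA, if_neg (not_lt.mpr h1.le), if_neg (Fin.ne_of_gt h1),
            if_neg (lt_irrefl i), if_pos rfl, if_neg (Fin.ne_of_gt h1),
            if_neg (show i ∉ Finset.Ioo j i by simp), lam, if_neg (lt_irrefl i)]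
          simp only [Nat.sub_self, LL]
          ring
        · have hji : j < i := hjk.trans h2
          rw [AA, AA, if_neg (not_lt.mpr hji.le), if_neg (Fin.ne_of_gt hji),
            if_neg (not_lt.mpr h2.le), if_neg (Fin.ne_of_gt h2),
            if_neg (show i ∉ Finset.Ioo j k by
              simp only [Finset.mem_Ioo]; rintro ⟨-, hc⟩; exact absurd h2 (not_lt.mpr hc.le)),
            if_neg (Fin.ne_of_gt hji)]
          ring
    rw [Finset.sum_congr rfl fun i _ => hident i]
    rw [Finset.sum_sub_distrib, Finset.sum_sub_distrib,
      Finset.sum_ite_eq' Finset.univ j, Finset.sum_ite_eq' Finset.univ k,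
      if_pos (Finset.mem_univ j), if_pos (Finset.mem_univ k),
      Finset.sum_ite_mem, Finset.univ_inter]
    have hkey := LL_key hK k ((k : ℕ) - (j : ℕ)) (by omega) j hjk rfl
    have hε : (if k = ℓ then (0:ℝ) else 1) ≤ 1 := by split <;> norm_num
    linarith
  · -- k < j : termwise
    have hkℓ : k ≠ ℓ := Fin.ne_of_lt (lt_of_lt_of_le hkj hj)
    have hbound : ∀ i : Fin n,
        (if i = k then (-1 : ℝ) else 0) + (if i = j then 2 else 0)
          ≤ lam C xb k i * AA C xb ℓ j i - lam C xb k i * AA C xb ℓ k i := by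
      intro i
      rcases lt_trichotomy i k with h1 | heq | h1
      · rw [AA, AA, if_pos (h1.trans hkj), if_pos h1, if_neg (Fin.ne_of_lt h1),
          if_neg (Fin.ne_of_lt (h1.trans hkj))]
        ring_nf
        norm_num
      · subst heq
        rw [AA, AA, if_pos hkj, if_neg (lt_irrefl i), if_pos rfl, if_neg hkℓ,
          if_pos rfl, if_neg (Fin.ne_of_lt hkj), lam, if_neg (lt_irrefl i)]
        simp only [Nat.sub_self, LL]
        ring_nf
        norm_num
      · have hlam : lam C xb k i = 2 := by rw [lam, if_pos h1]
        rcases lt_trichotomy i j with h2 | heq | h2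
        · rw [AA, AA, if_pos h2, if_neg (not_lt.mpr h1.le), if_neg (Fin.ne_of_gt h1), hlam,
            if_neg (Fin.ne_of_gt h1), if_neg (Fin.ne_of_lt h2)]
          have := hK i
          ring_nf
          nlinarith
        · subst heq
          rw [AA, AA, if_neg (lt_irrefl i), if_pos rfl, if_neg (not_lt.mpr h1.le),
            if_neg (Fin.ne_of_gt h1), hlam, if_neg (Fin.ne_of_gt h1), if_pos rfl]
          have hAjj : (1:ℝ) ≤ rdot (C i) xb + (if i = ℓ then 0 else 1) := by
            split
            · next h => subst h; linarith
            · linarith [hK i]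
          ring_nf
          nlinarith
        · rw [AA, AA, if_neg (not_lt.mpr h2.le),
            if_neg (Fin.ne_of_gt h2), if_neg (not_lt.mpr h1.le), if_neg (Fin.ne_of_gt h1),
            if_neg (Fin.ne_of_gt h2), if_neg (Fin.ne_of_gt h1)]
          ring_nf
          norm_num
    have hsum := Finset.sum_le_sum (s := Finset.univ) fun i _ => hbound i
    rw [Finset.sum_add_distrib, Finset.sum_ite_eq' Finset.univ k, Finset.sum_ite_eq' Finset.univ j,
      if_pos (Finset.mem_univ k), if_pos (Finset.mem_univ j)] at hsum
    linarith

include hC hK hI hℓ hmax in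
lemma fk_min {k : Fin n} (hk : k ≤ ℓ) :
    ∀ x ∈ convexHull ℝ (SS C xb), fk C xb k (VV C xb ℓ k) ≤ fk C xb k x ∧
      (fk C xb k x = fk C xb k (VV C xb ℓ k) → x = VV C xb ℓ k) := by
  intro x hx
  rw [QQ_eq_PP hC hK hI hℓ hmax] at hx
  obtain ⟨w, hw, d, hd, rfl⟩ := hx
  have hfd : 0 ≤ fk C xb k d := by
    refine Finset.sum_nonneg fun i _ => mul_nonneg (lam_pos hK k i).le (hd i)
  -- rewrite hull over a finite set
  have himg : VV C xb ℓ '' Set.Iic ℓ = ↑((Finset.Iic ℓ).image (VV C xb ℓ)) := by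
    rw [Finset.coe_image, Finset.coe_Iic]
  rw [himg, Finset.convexHull_eq] at hw
  obtain ⟨wt, hwt0, hwt1, hcm⟩ := hw
  set t := (Finset.Iic ℓ).image (VV C xb ℓ) with ht
  have hwrep : w = ∑ y ∈ t, wt y • y := by
    rw [← hcm, Finset.centerMass_eq_of_sum_1 _ _ hwt1]
    rfl
  have hfy : ∀ y ∈ t, fk C xb k (VV C xb ℓ k) ≤ fk C xb k y ∧
      (y ≠ VV C xb ℓ k → fk C xb k (VV C xb ℓ k) < fk C xb k y) := by
    intro y hy
    obtain ⟨j, hj, rfl⟩ := Finset.mem_image.mp hy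
    rw [Finset.mem_Iic] at hj
    by_cases hjk : j = k
    · subst hjk; exact ⟨le_rfl, fun h => absurd rfl h⟩
    · have := key_strict hC hK hI hℓ hmax hj hk hjk
      exact ⟨this.le, fun _ => this⟩
  have hfw : fk C xb k (VV C xb ℓ k) ≤ fk C xb k w := by
    rw [hwrep, fk_sum]
    calc fk C xb k (VV C xb ℓ k) = ∑ y ∈ t, wt y * fk C xb k (VV C xb ℓ k) := by
          rw [← Finset.sum_mul, hwt1, one_mul]
      _ ≤ ∑ y ∈ t, wt y * fk C xb k y :=
          Finset.sum_le_sum fun y hy => mul_le_mul_of_nonneg_left ((hfy y hy).1) (hwt0 y hy)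
  refine ⟨by rw [fk_add]; linarith, fun heq => ?_⟩
  rw [fk_add] at heq
  have hfd0 : fk C xb k d = 0 := by linarith
  have hfweq : fk C xb k w = fk C xb k (VV C xb ℓ k) := by linarith
  have hd0 : d = 0 := by
    have hterm : ∀ i ∈ Finset.univ, (0:ℝ) ≤ lam C xb k i * rdot (C i) d :=
      fun i _ => mul_nonneg (lam_pos hK k i).le (hd i)
    have := (Finset.sum_eq_zero_iff_of_nonneg hterm).mp hfd0
    refine rdot_inj C hC fun i => ?_
    rw [rdot_zero]
    have h0 := this i (Finset.mem_univ i)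
    have := (lam_pos hK k i).ne'
    exact (mul_eq_zero.mp h0).resolve_left this
  -- weights concentrate on VV k
  have hwt_zero : ∀ y ∈ t, y ≠ VV C xb ℓ k → wt y = 0 := by
    intro y₀ hy₀ hne
    by_contra hne0
    have hpos : 0 < wt y₀ := lt_of_le_of_ne (hwt0 y₀ hy₀) (Ne.symm hne0)
    have hstrict : ∑ y ∈ t, wt y * fk C xb k (VV C xb ℓ k) < ∑ y ∈ t, wt y * fk C xb k y := by
      refine Finset.sum_lt_sum
        (fun y hy => mul_le_mul_of_nonneg_left ((hfy y hy).1) (hwt0 y hy)) ⟨y₀, hy₀, ?_⟩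
      exact mul_lt_mul_of_pos_left ((hfy y₀ hy₀).2 hne) hpos
    rw [← Finset.sum_mul, hwt1, one_mul] at hstrict
    rw [hwrep, fk_sum] at hfweq
    linarith
  have hVkt : VV C xb ℓ k ∈ t := Finset.mem_image.mpr ⟨k, Finset.mem_Iic.mpr hk, rfl⟩
  have hwtk : wt (VV C xb ℓ k) = 1 := by
    rw [← hwt1]
    exact (Finset.sum_eq_single _ (fun y hy hne => hwt_zero y hy hne) (fun h => absurd hVkt h)).symm
  have hweq : w = VV C xb ℓ k := by
    rw [hwrep, Finset.sum_eq_single (VV C xb ℓ k)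
      (fun y hy hne => by rw [hwt_zero y hy hne, zero_smul])
      (fun h => absurd hVkt h), hwtk, one_smul]
  rw [hd0, hweq, add_zero]

include hC hK hI hℓ hmax in
lemma vertex_extreme {k : Fin n} (hk : k ≤ ℓ) :
    VV C xb ℓ k ∈ Set.extremePoints ℝ (convexHull ℝ (SS C xb)) := by
  refine ⟨subset_convexHull ℝ _ (VV_mem_SS hC hK hI hℓ hmax hk), ?_⟩
  rintro x₁ h₁ x₂ h₂ ⟨a, b, ha, hb, hab, hsum⟩

  have hf := congrArg (fk C xb k) hsum
  rw [fk_combo] at hf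
  have hm1 := fk_min hC hK hI hℓ hmax hk x₁ h₁
  have hm2 := fk_min hC hK hI hℓ hmax hk x₂ h₂
  have h3 : a * fk C xb k (VV C xb ℓ k) + b * fk C xb k (VV C xb ℓ k) = fk C xb k (VV C xb ℓ k) := by
    rw [← add_mul, hab, one_mul]
  have he1 : fk C xb k x₁ = fk C xb k (VV C xb ℓ k) := by
    refine le_antisymm (le_of_mul_le_mul_left ?_ ha) hm1.1
    linarith [mul_le_mul_of_nonneg_left hm2.1 hb.le]
  have he2 : fk C xb k x₂ = fk C xb k (VV C xb ℓ k) := by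
    refine le_antisymm (le_of_mul_le_mul_left ?_ hb) hm2.1
    linarith [mul_le_mul_of_nonneg_left hm1.1 ha.le]
  exact hm1.2 he1

lemma extreme_mono {A B : Set (Fin n → ℝ)} (hAB : A ⊆ B) {x : Fin n → ℝ}
    (hx : x ∈ Set.extremePoints ℝ B) (hxA : x ∈ A) : x ∈ Set.extremePoints ℝ A :=
  ⟨hxA, fun x₁ h₁ x₂ h₂ hseg => hx.2 (hAB h₁) (hAB h₂) hseg⟩

end Stmt8


open Stmt8

/-- Let `c¹,…,cⁿ` (the rows of a unimodular `C`) be a lattice basis of `ℤⁿ`, let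
`x̄ ∈ K_C ∩ ℤⁿ` with `cⁱ·x̄ > 0` for some `i`, and let `ℓ` be the largest such index.
Then (1) for each `k < ℓ` there is a unique point `v` with `cⁱ·v = cⁱ·x̄` for `i < k`,
`cᵏ·v = cᵏ·x̄ + 1`, `cⁱ·v = 0` for `i > k`; (2) the extreme points of `Q_C(x̄)` are
exactly `x̄` together with these points; (3) the recession cone of `Q_C(x̄)` is `K_C`;
(4) `Q_C(x̄)` is full-dimensional. -/
theorem stmt8 {n : ℕ} (C : Matrix (Fin n) (Fin n) ℤ) (hC : C.det = 1 ∨ C.det = -1)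
    (xb : Fin n → ℝ) (hK : ∀ i, 0 ≤ rdot (C i) xb) (hI : isInt xb)
    (ℓ : Fin n) (hℓ : 0 < rdot (C ℓ) xb) (hmax : ∀ i : Fin n, 0 < rdot (C i) xb → i ≤ ℓ) :
    (∀ k : Fin n, k < ℓ → ∃! v : Fin n → ℝ,
      (∀ i : Fin n, i < k → rdot (C i) v = rdot (C i) xb) ∧
      rdot (C k) v = rdot (C k) xb + 1 ∧
      (∀ i : Fin n, k < i → rdot (C i) v = 0)) ∧
    (Set.extremePoints ℝ (QC C xb) =
      {v : Fin n → ℝ | v = xb ∨ ∃ k : Fin n, k < ℓ ∧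
        (∀ i : Fin n, i < k → rdot (C i) v = rdot (C i) xb) ∧
        rdot (C k) v = rdot (C k) xb + 1 ∧
        (∀ i : Fin n, k < i → rdot (C i) v = 0)}) ∧
    (∀ d : Fin n → ℝ,
      (∀ x ∈ QC C xb, ∀ t : ℝ, 0 ≤ t → x + t • d ∈ QC C xb) ↔ ∀ i, 0 ≤ rdot (C i) d) ∧
    (interior (QC C xb)).Nonempty := by
  classical
  have hQ : QC C xb = convexHull ℝ (SS C xb) := rfl
  have hxbQ : xb ∈ convexHull ℝ (SS C xb) := subset_convexHull ℝ _ ⟨hK, hI, Or.inr rfl⟩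
  have hmatch : ∀ v : Fin n → ℝ, ∀ k : Fin n, k < ℓ →
      (∀ i : Fin n, i < k → rdot (C i) v = rdot (C i) xb) →
      rdot (C k) v = rdot (C k) xb + 1 →
      (∀ i : Fin n, k < i → rdot (C i) v = 0) → v = VV C xb ℓ k := by
    intro v k hkℓ h1 h2 h3
    refine rdot_inj C hC fun i => ?_
    rw [rdot_VV hC, AA]
    rcases lt_trichotomy i k with h | h | h
    · rw [if_pos h]; exact h1 i h
    · subst h
      rw [if_neg (lt_irrefl i), if_pos rfl, if_neg (Fin.ne_of_lt hkℓ)]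
      exact h2
    · rw [if_neg (not_lt.mpr h.le), if_neg (Fin.ne_of_gt h)]
      exact h3 i h
  have hVk_props : ∀ k : Fin n, k < ℓ →
      (∀ i : Fin n, i < k → rdot (C i) (VV C xb ℓ k) = rdot (C i) xb) ∧
      rdot (C k) (VV C xb ℓ k) = rdot (C k) xb + 1 ∧
      (∀ i : Fin n, k < i → rdot (C i) (VV C xb ℓ k) = 0) := by
    intro k hkℓ
    refine ⟨fun i hik => ?_, ?_, fun i hki => ?_⟩
    · rw [rdot_VV hC, AA, if_pos hik]
    · rw [rdot_VV hC, AA, if_neg (lt_irrefl k), if_pos rfl, if_neg (Fin.ne_of_lt hkℓ)]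
    · rw [rdot_VV hC, AA, if_neg (not_lt.mpr hki.le), if_neg (Fin.ne_of_gt hki)]
  refine ⟨?_, ?_, ?_, ?_⟩
  · -- (1) unique points
    intro k hkℓ
    obtain ⟨p1, p2, p3⟩ := hVk_props k hkℓ
    exact ⟨VV C xb ℓ k, ⟨p1, p2, p3⟩, fun v ⟨h1, h2, h3⟩ => hmatch v k hkℓ h1 h2 h3⟩
  · -- (2) extreme points
    ext v
    simp only [Set.mem_setOf_eq]
    constructor
    · intro hv
      have hvQ := hv.1
      rw [hQ, QQ_eq_PP hC hK hI hℓ hmax] at hvQ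
      obtain ⟨w, hw, d, hd, rfl⟩ := hvQ
      have hhullQ : convexHull ℝ (VV C xb ℓ '' Set.Iic ℓ) ⊆ QC C xb := by
        rw [hQ]
        refine convexHull_min ?_ (convex_convexHull ℝ _)
        rintro _ ⟨k, hk, rfl⟩
        exact subset_convexHull ℝ _ (VV_mem_SS hC hK hI hℓ hmax hk)
      have hwQ : w ∈ QC C xb := hhullQ hw
      have hw2Q : w + (2:ℝ) • d ∈ QC C xb := by
        rw [hQ] at hwQ ⊢
        exact L3 hC w hwQ _ (fun i => by rw [rdot_smul]; nlinarith [hd i])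
      have hseg : w + d ∈ openSegment ℝ w (w + (2:ℝ) • d) :=
        ⟨1/2, 1/2, by norm_num, by norm_num, by norm_num, by module⟩
      have he1 := hv.2 hwQ hw2Q hseg
      have he2 := hv.2 hw2Q hwQ (by rwa [openSegment_symm] at hseg)
      have hd0 : d = 0 := by
        have h2d : (2:ℝ) • d = 0 := by
          have h4 : w = w + (2:ℝ) • d := he1.trans he2.symm
          have := congrArg (fun z => z - w) h4
          simpa using this.symm
        simpa using (smul_eq_zero.mp h2d).resolve_left (by norm_num)
      have hvhull : w + d ∈ convexHull ℝ (VV C xb ℓ '' Set.Iic ℓ) := by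
        rw [hd0, add_zero]; exact hw
      have hext := extreme_mono hhullQ hv hvhull
      have hvimg := extremePoints_convexHull_subset hext
      obtain ⟨k, hk, hkv⟩ := hvimg
      have hkℓ : k ≤ ℓ := hk
      rcases eq_or_lt_of_le hkℓ with heq | hklt
      · subst heq
        left
        rw [← hkv]
        exact (xb_eq_VV hC hK hI hmax).symm
      · right
        obtain ⟨p1, p2, p3⟩ := hVk_props k hklt
        exact ⟨k, hklt, fun i hik => by rw [← hkv]; exact p1 i hik,
          by rw [← hkv]; exact p2, fun i hki => by rw [← hkv]; exact p3 i hki⟩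
    · intro hv
      rcases hv with rfl | ⟨k, hkℓ, h1, h2, h3⟩
      · have hx := vertex_extreme hC hK hI hℓ hmax (le_refl ℓ)
        rw [← xb_eq_VV hC hK hI hmax] at hx
        exact hx
      · rw [hmatch v k hkℓ h1 h2 h3]
        exact vertex_extreme hC hK hI hℓ hmax hkℓ.le
  · -- (3) recession cone
    intro d
    constructor
    · intro h i
      by_contra hneg
      push_neg at hneg
      have hr : rdot (C i) d < 0 := hneg
      set t := (rdot (C i) xb + 1) / (-(rdot (C i) d)) with htdef
      have ht : 0 ≤ t := div_nonneg (by linarith [hK i]) (by linarith)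
      have hmem := h xb (hQ ▸ hxbQ) t ht
      rw [hQ] at hmem
      have hge := QQ_sub_K _ hmem i
      rw [rdot_add, rdot_smul] at hge
      have hne : rdot (C i) d ≠ 0 := ne_of_lt hr
      have htr : t * rdot (C i) d = -(rdot (C i) xb + 1) := by
        rw [htdef, div_mul_eq_mul_div, div_eq_iff (neg_ne_zero.mpr hne)]
        ring
      rw [htr] at hge
      linarith [hK i]
    · intro hd x hx t ht
      rw [hQ] at hx ⊢
      exact L3 hC x hx _ (fun i => by rw [rdot_smul]; exact mul_nonneg ht (hd i))
  · -- (4) interior nonempty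
    refine ⟨xb + (Er C).mulVec 1, ?_⟩
    rw [mem_interior]
    refine ⟨{x | ∀ i, rdot (C i) xb < rdot (C i) x}, ?_, ?_, ?_⟩
    · intro x hx
      rw [hQ]
      have := L3 hC xb hxbQ (x - xb) (fun i => by rw [rdot_sub]; linarith [hx i])
      simpa using this
    · have hiI : {x : Fin n → ℝ | ∀ i, rdot (C i) xb < rdot (C i) x} =
          ⋂ i, {x | rdot (C i) xb < rdot (C i) x} := by
        ext x; simp [Set.mem_iInter]
      rw [hiI]
      refine isOpen_iInter_of_finite fun i => ?_
      have hcont : Continuous fun x : Fin n → ℝ => rdot (C i) x := by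
        show Continuous fun x : Fin n → ℝ => ∑ j, ((C i j : ℝ) * x j)
        exact continuous_finset_sum Finset.univ fun j _ => continuous_const.mul (continuous_apply j)
      exact isOpen_lt continuous_const hcont
    · intro i
      rw [rdot_add, rdot_solve C hC (1 : Fin n → ℝ) i]
      simp
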